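/- Let $(K, \Omega, \phi)$ be a proper adelic curve with height $h$, where each absolute value $|\cdot|_\omega$ is either ultrametric or of the form $\|\cdot\|^{\epsilon(\omega)}$ for a triangle-inequality absolute value, with $\int_\Omega \log^+|2|_\omega \, d\mu \le \log 2$. Then for any $\alpha, \beta \in K^\times$ with $\alpha \ne \beta$ and any measurable $U \subseteq \Omega$, $\int_U \log|\alpha - \beta|_\omega \, d\mu(\omega) \ge -\log 2 - h(\alpha) - h(\beta)$. -/

import Mathlib

open MeasureTheory Finset

lemma natlog_bound {K : Type*} [Field K] (w : AbsoluteValue K ℝ) (m : ℕ) :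
    w m ≤ (Nat.log 2 m + 1) * max 1 (w 2) ^ (Nat.log 2 m) := by
  set C := max 1 (w 2) with hC
  have hC1 : (1:ℝ) ≤ C := le_max_left _ _
  have hCpos : (0:ℝ) < C := lt_of_lt_of_le one_pos hC1
  induction m using Nat.strong_induction_on with
  | _ m ih =>
    rcases lt_or_ge m 2 with hm | hm
    · interval_cases m
      · simpa [w.map_zero] using zero_le_one
      · simp [w.map_one]
    · have hq1 : 1 ≤ m / 2 := Nat.one_le_div_iff (by norm_num) |>.2 hm
      have hqlt : m / 2 < m := Nat.div_lt_self (by omega) (by norm_num)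
      have hlog : Nat.log 2 m = Nat.log 2 (m / 2) + 1 := by
        have hp := Nat.log_pos (by norm_num : (1:ℕ) < 2) hm
        have hd := Nat.log_div_base 2 m
        omega
      have hsplit : (m : K) = 2 * (m / 2 : ℕ) + (m % 2 : ℕ) := by
        rw [show (2:K) = ((2:ℕ):K) by norm_num, ← Nat.cast_mul, ← Nat.cast_add]
        congr 1
        omega
      have hr : w (m % 2 : ℕ) ≤ 1 := by
        rcases Nat.mod_two_eq_zero_or_one m with h | h <;> simp [h, w.map_zero, w.map_one]
      set L := Nat.log 2 (m / 2) with hL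
      have key : w m ≤ w 2 * w (m / 2 : ℕ) + w (m % 2 : ℕ) := by
        rw [hsplit]
        exact le_trans (w.add_le _ _) (by rw [w.map_mul])
      have h1 : w (m / 2 : ℕ) ≤ (L + 1) * C ^ L := ih _ hqlt
      have h2 : w 2 * w (m / 2 : ℕ) ≤ C * ((L + 1) * C ^ L) :=
        by nlinarith [w.nonneg ((m / 2 : ℕ) : K), le_max_right (1:ℝ) (w 2), pow_nonneg hCpos.le L]
      have h3 : (1:ℝ) ≤ C ^ L := one_le_pow₀ hC1
      have h4 : w m ≤ C * ((L + 1) * C ^ L) + 1 := by linarith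
      rw [hlog]
      push_cast
      have h5 : C ^ (L + 1) = C ^ L * C := pow_succ C L
      nlinarith [pow_nonneg hCpos.le L]

lemma artin_bound {K : Type*} [Field K] (w : AbsoluteValue K ℝ) (x y : K) :
    w (x + y) ≤ max 1 (w 2) * max (w x) (w y) := by
  set C := max 1 (w 2) with hCdef
  set M := max (w x) (w y) with hMdef
  have hC1 : (1:ℝ) ≤ C := le_max_left _ _
  have hCpos : (0:ℝ) < C := lt_of_lt_of_le one_pos hC1
  have hM0 : 0 ≤ M := le_trans (w.nonneg x) (le_max_left _ _)
  rcases eq_or_lt_of_le hM0 with hM | hM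
  · have hx : w x = 0 := le_antisymm (le_of_le_of_eq (le_max_left _ _) hM.symm) (w.nonneg x)
    have hy : w y = 0 := le_antisymm (le_of_le_of_eq (le_max_right _ _) hM.symm) (w.nonneg y)
    rw [w.eq_zero] at hx hy
    simp [hx, hy, w.map_zero]
    positivity
  · -- main bound for every n
    have hn : ∀ n : ℕ, w (x + y) ^ n ≤ ((n:ℝ) + 1) ^ 2 * (C * M) ^ n := by
      intro n
      have expand : w ((x + y) ^ n) ≤ ∑ k ∈ range (n + 1),
          w (x ^ k * y ^ (n - k) * (n.choose k : K)) := by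
        rw [add_pow]
        exact w.sum_le _ _
      have hterm : ∀ k ∈ range (n + 1),
          w (x ^ k * y ^ (n - k) * (n.choose k : K)) ≤ M ^ n * (((n:ℝ) + 1) * C ^ n) := by
        intro k hk
        have hkn : k ≤ n := Nat.lt_succ_iff.mp (mem_range.mp hk)
        have e1 : w (x ^ k * y ^ (n - k) * (n.choose k : K))
            = w x ^ k * w y ^ (n - k) * w (n.choose k : K) := by
          rw [w.map_mul, w.map_mul, w.map_pow, w.map_pow]
        have b1 : w x ^ k * w y ^ (n - k) ≤ M ^ n := by
          calc w x ^ k * w y ^ (n - k) ≤ M ^ k * M ^ (n - k) := by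
                apply mul_le_mul (pow_le_pow_left₀ (w.nonneg x) (le_max_left _ _) k)
                  (pow_le_pow_left₀ (w.nonneg y) (le_max_right _ _) _)
                  (by positivity) (by positivity)
            _ = M ^ n := by rw [← pow_add]; congr 1; omega
        have hchoose : n.choose k ≤ 2 ^ n := by
          rcases le_or_gt k n with h | h
          · calc n.choose k ≤ ∑ m ∈ range (n + 1), n.choose m :=
                single_le_sum (fun i _ => Nat.zero_le _) (mem_range.mpr (Nat.lt_succ_of_le h))
              _ = 2 ^ n := Nat.sum_range_choose n
          · simp [Nat.choose_eq_zero_of_lt h]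
        have hlog : Nat.log 2 (n.choose k) ≤ n := by
          calc Nat.log 2 (n.choose k) ≤ Nat.log 2 (2 ^ n) :=
              Nat.log_mono_right hchoose
            _ = n := Nat.log_pow (by norm_num) n
        have b2 : w (n.choose k : K) ≤ ((n:ℝ) + 1) * C ^ n := by
          refine le_trans (natlog_bound w _) ?_
          apply mul_le_mul
          · push_cast; exact_mod_cast by exact_mod_cast Nat.succ_le_succ hlog
          · exact pow_le_pow_right₀ hC1 hlog
          · positivity
          · positivity
        rw [e1]
        exact mul_le_mul b1 b2 (w.nonneg _) (by positivity)
      calc w (x + y) ^ n = w ((x + y) ^ n) := (w.map_pow _ _).symm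
        _ ≤ ∑ k ∈ range (n + 1), w (x ^ k * y ^ (n - k) * (n.choose k : K)) := expand
        _ ≤ ∑ _k ∈ range (n + 1), M ^ n * (((n:ℝ) + 1) * C ^ n) := sum_le_sum hterm
        _ = ((n:ℝ) + 1) ^ 2 * (C * M) ^ n := by
            rw [sum_const, card_range, nsmul_eq_mul, mul_pow]
            push_cast; ring
    by_contra hcon
    push_neg at hcon
    have hCM : 0 < C * M := by positivity
    set r := w (x + y) / (C * M) with hrdef
    have hr : 1 < r := (one_lt_div hCM).mpr hcon
    have hrn : ∀ n : ℕ, r ^ n ≤ ((n:ℝ) + 1) ^ 2 := by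
      intro n
      rw [hrdef, div_pow, div_le_iff₀ (by positivity)]
      exact hn n
    have htend : Filter.Tendsto (fun n : ℕ => (((n + 1 : ℕ)):ℝ) ^ 2 / r ^ (n + 1))
        Filter.atTop (nhds 0) := by
      have := (tendsto_pow_const_div_const_pow_of_one_lt 2 hr).comp
        (Filter.tendsto_add_atTop_nat 1)
      simpa [Function.comp_def] using this
    have hev := htend.eventually_lt_const (show (0:ℝ) < 1 / r by positivity)
    obtain ⟨n, hnlt⟩ := hev.exists
    push_cast at hnlt
    have hrpos : 0 < r := lt_trans one_pos hr
    have : ((n:ℝ) + 1) ^ 2 < r ^ n := by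
      have h1 : ((n:ℝ) + 1) ^ 2 < (1 / r) * r ^ (n + 1) := by
        rw [div_lt_iff₀ (by positivity)] at hnlt
        linarith [hnlt]
      have : (1 / r) * r ^ (n + 1) = r ^ n := by
        field_simp [pow_succ]
        ring
      linarith [h1, this.le, this.ge]
    exact absurd (hrn n) (not_le.mpr this)

lemma pointwise_bound {K : Type*} [Field K] [CharZero K] (v : K → ℝ) (e : ℝ)
    (hnn : ∀ x, 0 ≤ v x) (hz : ∀ x : K, v x = 0 ↔ x = 0)
    (hm : ∀ x y : K, v (x * y) = v x * v y)
    (hp : (∀ x y : K, v (x + y) ≤ max (v x) (v y)) ∨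
      (∃ w : AbsoluteValue K ℝ, 0 < e ∧ e ≤ 1 ∧ ∀ x, v x = w x ^ e))
    (α β : K) (hα : α ≠ 0) (hβ : β ≠ 0) (hne : α ≠ β) :
    Real.log (v (α - β)) ≤ max 0 (Real.log (v α)) + max 0 (Real.log (v β))
      + max 0 (Real.log (v 2)) := by
  have hpos : ∀ x : K, x ≠ 0 → 0 < v x := fun x hx =>
    lt_of_le_of_ne (hnn x) (Ne.symm (fun h => hx ((hz x).1 h)))
  have hγ : α - β ≠ 0 := sub_ne_zero.mpr hne
  have hvγ : 0 < v (α - β) := hpos _ hγ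
  have hvα : 0 < v α := hpos _ hα
  have hvβ : 0 < v β := hpos _ hβ
  have h2K : (2 : K) ≠ 0 := two_ne_zero
  have hv2 : 0 < v 2 := hpos _ h2K
  have main : Real.log (v (α - β)) ≤ max (Real.log (v α)) (Real.log (v β))
      + max 0 (Real.log (v 2)) := by
    have hv1 : v 1 = 1 := by
      have h := hm 1 1
      rw [one_mul] at h
      have h1 : v 1 ≠ 0 := fun h0 => one_ne_zero ((hz 1).1 h0)
      nlinarith [h, h1.lt_of_le' (lt_of_le_of_ne (hnn 1) (Ne.symm h1)).le]
    have hvneg : v (-β) = v β := by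
      have hneg1 : v (-1) = 1 := by
        have h := hm (-1) (-1)
        rw [neg_mul_neg, one_mul, hv1] at h
        nlinarith [hnn (-1 : K)]
      rw [show (-β : K) = (-1) * β by ring, hm, hneg1, one_mul]
    have logmax : ∀ a b : ℝ, 0 < a → 0 < b →
        Real.log (max a b) = max (Real.log a) (Real.log b) := by
      intro a b ha hb
      rcases le_total a b with h | h
      · rw [max_eq_right h, max_eq_right (Real.log_le_log ha h)]
      · rw [max_eq_left h, max_eq_left (Real.log_le_log hb h)]
    rcases hp with hult | ⟨w, he, _, hw⟩
    · have hle : v (α - β) ≤ max (v α) (v β) := by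
        rw [sub_eq_add_neg]
        exact le_trans (hult α (-β)) (by rw [hvneg])
      have hlog : Real.log (v (α - β)) ≤ max (Real.log (v α)) (Real.log (v β)) := by
        rw [← logmax _ _ hvα hvβ]
        exact Real.log_le_log hvγ hle
      have : (0:ℝ) ≤ max 0 (Real.log (v 2)) := le_max_left _ _
      linarith
    · have hwα : 0 < w α := w.pos hα
      have hwβ : 0 < w β := w.pos hβ
      have hwγ : 0 < w (α - β) := w.pos hγ
      have hw2 : 0 < w 2 := w.pos h2K
      set C := max 1 (w 2) with hCdef
      have hC1 : (1:ℝ) ≤ C := le_max_left _ _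
      have hCpos : (0:ℝ) < C := lt_of_lt_of_le one_pos hC1
      have hle : w (α - β) ≤ C * max (w α) (w β) := by
        rw [sub_eq_add_neg]
        exact le_trans (artin_bound w α (-β)) (by rw [w.map_neg])
      have hlogw : Real.log (w (α - β)) ≤ Real.log C
          + max (Real.log (w α)) (Real.log (w β)) := by
        refine le_trans (Real.log_le_log hwγ hle) ?_
        rw [Real.log_mul hCpos.ne' (by positivity), logmax _ _ hwα hwβ]
      have hlogC : Real.log C = max 0 (Real.log (w 2)) := by
        rcases le_total (w 2) 1 with h | h
        · rw [hCdef, max_eq_left h, Real.log_one,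
            max_eq_left (Real.log_nonpos hw2.le h)]
        · rw [hCdef, max_eq_right h, max_eq_right (Real.log_nonneg h)]
      have e1 : Real.log (v (α - β)) = e * Real.log (w (α - β)) := by
        rw [hw (α - β), Real.log_rpow hwγ]
      have e2 : e * Real.log C = max 0 (Real.log (v 2)) := by
        rw [hlogC, mul_max_of_nonneg _ _ he.le, mul_zero, hw 2, Real.log_rpow hw2]
      have e3 : e * max (Real.log (w α)) (Real.log (w β))
          = max (Real.log (v α)) (Real.log (v β)) := by
        rw [mul_max_of_nonneg _ _ he.le, hw α, hw β,
          Real.log_rpow hwα, Real.log_rpow hwβ]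
      have := mul_le_mul_of_nonneg_left hlogw he.le
      rw [mul_add, e2, e3] at this
      rw [e1]
      linarith
  have m1 : Real.log (v α) ≤ max 0 (Real.log (v α)) := le_max_right _ _
  have m2 : Real.log (v β) ≤ max 0 (Real.log (v β)) := le_max_right _ _
  have m3 : (0:ℝ) ≤ max 0 (Real.log (v α)) := le_max_left _ _
  have m4 : (0:ℝ) ≤ max 0 (Real.log (v β)) := le_max_left _ _
  have : max (Real.log (v α)) (Real.log (v β)) ≤
      max 0 (Real.log (v α)) + max 0 (Real.log (v β)) :=
    max_le (by linarith) (by linarith)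
  linarith

theorem stmt_7 {K : Type*} [Field K] [CharZero K]
    {Ω : Type*} [MeasurableSpace Ω] (μ : Measure Ω)
    (v : Ω → K → ℝ) (eps : Ω → ℝ)
    (hnonneg : ∀ ω x, 0 ≤ v ω x)
    (hzero : ∀ ω (x : K), v ω x = 0 ↔ x = 0)
    (hmul : ∀ ω (x y : K), v ω (x * y) = v ω x * v ω y)
    (hplaces : ∀ ω, (∀ x y : K, v ω (x + y) ≤ max (v ω x) (v ω y)) ∨
      (∃ w : AbsoluteValue K ℝ, 0 < eps ω ∧ eps ω ≤ 1 ∧ ∀ x, v ω x = w x ^ eps ω))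
    (hint : ∀ a : K, a ≠ 0 → Integrable (fun ω => Real.log (v ω a)) μ)
    (hprod : ∀ a : K, a ≠ 0 → ∫ ω, Real.log (v ω a) ∂μ = 0)
    (h2 : ∫ ω, max 0 (Real.log (v ω 2)) ∂μ ≤ Real.log 2)
    (α β : K) (hα : α ≠ 0) (hβ : β ≠ 0) (hne : α ≠ β)
    (U : Set Ω) (hU : MeasurableSet U) :
    -Real.log 2 - (∫ ω, max 0 (Real.log (v ω α)) ∂μ)
      - (∫ ω, max 0 (Real.log (v ω β)) ∂μ)
      ≤ ∫ ω in U, Real.log (v ω (α - β)) ∂μ := by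
  have hγ : α - β ≠ 0 := sub_ne_zero.mpr hne
  have h2K : (2 : K) ≠ 0 := two_ne_zero
  have hfint := hint _ hγ
  have pos_int : ∀ a : K, a ≠ 0 →
      Integrable (fun ω => max 0 (Real.log (v ω a))) μ := by
    intro a ha
    have := (hint a ha).pos_part
    simpa [max_comm] using this
  have pα := pos_int α hα
  have pβ := pos_int β hβ
  have p2 := pos_int 2 h2K
  set g : Ω → ℝ := fun ω => max 0 (Real.log (v ω α)) + max 0 (Real.log (v ω β))
    + max 0 (Real.log (v ω 2)) with hgdef
  have hg : Integrable g μ := (pα.add pβ).add p2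
  have hgnn : ∀ ω, 0 ≤ g ω := fun ω => by
    have a1 : (0:ℝ) ≤ max 0 (Real.log (v ω α)) := le_max_left _ _
    have a2 : (0:ℝ) ≤ max 0 (Real.log (v ω β)) := le_max_left _ _
    have a3 : (0:ℝ) ≤ max 0 (Real.log (v ω 2)) := le_max_left _ _
    simp only [hgdef]; linarith
  have hpt : ∀ ω, Real.log (v ω (α - β)) ≤ g ω := fun ω =>
    pointwise_bound (v ω) (eps ω) (hnonneg ω) (hzero ω) (hmul ω) (hplaces ω)
      α β hα hβ hne
  have hsplit : (∫ ω in U, Real.log (v ω (α - β)) ∂μ)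
      + (∫ ω in Uᶜ, Real.log (v ω (α - β)) ∂μ) = 0 := by
    rw [integral_add_compl hU hfint, hprod _ hγ]
  have h5 : (∫ ω in Uᶜ, Real.log (v ω (α - β)) ∂μ) ≤ ∫ ω in Uᶜ, g ω ∂μ :=
    setIntegral_mono_on hfint.integrableOn hg.integrableOn hU.compl
      (fun ω _ => hpt ω)
  have h6 : (∫ ω in Uᶜ, g ω ∂μ) ≤ ∫ ω, g ω ∂μ :=
    setIntegral_le_integral hg (Filter.Eventually.of_forall hgnn)
  have h7 : (∫ ω, g ω ∂μ) = (∫ ω, max 0 (Real.log (v ω α)) ∂μ)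
      + (∫ ω, max 0 (Real.log (v ω β)) ∂μ)
      + (∫ ω, max 0 (Real.log (v ω 2)) ∂μ) := by
    have h7a := integral_add (pα.add pβ) p2
    have h7b := integral_add pα pβ
    simp only [Pi.add_apply] at h7a h7b
    simp only [hgdef]
    rw [h7a, h7b]
  linarith
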